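/- The stable self-similar Burgers profile \(\overline{W}\) is smooth near 0 and its derivatives at the origin take the values \(\overline{W}(0) = 0\), \(\overline{W}'(0) = -1\), \(\overline{W}''(0) = 0\), and \(\overline{W}'''(0) = 6\), where \(\overline{W}^{(n)}\) denotes the n-th iterated derivative. -/

import Mathlib

/-- The stable self-similar Burgers profile. -/
noncomputable def burgersW (y : ℝ) : ℝ :=
  (-(y / 2) + Real.sqrt (1 / 27 + y ^ 2 / 4)) ^ ((1 : ℝ) / 3)
    - (y / 2 + Real.sqrt (1 / 27 + y ^ 2 / 4)) ^ ((1 : ℝ) / 3)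

open Filter Topology

private lemma cube_rpow (a : ℝ) (ha : 0 ≤ a) : (a ^ ((1:ℝ)/3)) ^ (3:ℕ) = a := by
  rw [← Real.rpow_natCast (a ^ ((1:ℝ)/3)) 3, ← Real.rpow_mul ha]
  norm_num

/-- The cubic identity satisfied by the Burgers profile. -/
lemma burgersW_cubic (y : ℝ) : burgersW y ^ 3 + burgersW y + y = 0 := by
  have hs0 : (0:ℝ) ≤ Real.sqrt (1 / 27 + y ^ 2 / 4) := Real.sqrt_nonneg _
  have hs2 : Real.sqrt (1 / 27 + y ^ 2 / 4) ^ 2 = 1 / 27 + y ^ 2 / 4 :=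
    Real.sq_sqrt (by positivity)
  set s := Real.sqrt (1 / 27 + y ^ 2 / 4) with hs
  have ha : (0:ℝ) < -(y/2) + s := by nlinarith
  have hb : (0:ℝ) < y/2 + s := by nlinarith
  have hu3 : ((-(y/2) + s) ^ ((1:ℝ)/3)) ^ (3:ℕ) = -(y/2) + s := cube_rpow _ ha.le
  have hv3 : ((y/2 + s) ^ ((1:ℝ)/3)) ^ (3:ℕ) = y/2 + s := cube_rpow _ hb.le
  have huv : (-(y/2) + s) ^ ((1:ℝ)/3) * (y/2 + s) ^ ((1:ℝ)/3) = 1/3 := by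
    rw [← Real.mul_rpow ha.le hb.le]
    have h27 : (-(y/2) + s) * (y/2 + s) = 1/27 := by nlinarith
    rw [h27, show (1/27:ℝ) = (1/3:ℝ) ^ (3:ℕ) by norm_num, ← Real.rpow_natCast (1/3:ℝ) 3,
      ← Real.rpow_mul (by norm_num)]
    norm_num
  unfold burgersW
  rw [← hs]
  set u := (-(y/2) + s) ^ ((1:ℝ)/3)
  set v := (y/2 + s) ^ ((1:ℝ)/3)
  linear_combination hu3 - hv3 - (3 * (u - v)) * huv

lemma burgersW_zero : burgersW 0 = 0 := by
  have h := burgersW_cubic 0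
  have h2 : burgersW 0 * (burgersW 0 ^ 2 + 1) = 0 := by linear_combination h
  rcases mul_eq_zero.1 h2 with h3 | h3
  · exact h3
  · nlinarith [sq_nonneg (burgersW 0)]

/-- Smoothness at 0 via the inverse function theorem applied to `w ↦ -(w^3 + w)`. -/
lemma burgersW_contDiffAt : ContDiffAt ℝ (⊤ : ℕ∞) burgersW 0 := by
  set f : ℝ → ℝ := fun w => -(w ^ 3 + w) with hf_def
  have hf : ContDiff ℝ (⊤ : ℕ∞) f := ((contDiff_id.pow 3).add contDiff_id).neg
  have hf0 : f 0 = 0 := by simp [hf_def]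
  have hder : HasDerivAt f (-1) 0 := by
    have h : HasDerivAt (fun w : ℝ => -(w ^ 3 + w)) (-(((3:ℕ):ℝ) * 0 ^ (3 - 1) + 1)) 0 :=
      ((hasDerivAt_pow 3 (0:ℝ)).add (hasDerivAt_id 0)).neg
    convert h using 1 <;> norm_num
  set e : ℝ ≃L[ℝ] ℝ := ContinuousLinearEquiv.unitsEquivAut ℝ (Units.mk0 (-1:ℝ) (by norm_num))
    with he_def
  have hFD : HasFDerivAt f (e : ℝ →L[ℝ] ℝ) 0 := by
    have h := hder.hasFDerivAt
    exact h.congr_fderiv (by ext; simp [he_def])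
  have hfa : ContDiffAt ℝ (⊤ : ℕ∞) f 0 := hf.contDiffAt
  have hone : ((⊤ : ℕ∞) : WithTop ℕ∞) ≠ 0 := by simp
  have hg : ContDiffAt ℝ (⊤ : ℕ∞) (hfa.localInverse hFD hone) 0 := by
    have := hfa.to_localInverse hFD hone
    rwa [hf0] at this
  have hright : ∀ᶠ y in 𝓝 (0:ℝ), f (hfa.localInverse hFD hone y) = y := by
    have := (hfa.hasStrictFDerivAt' hFD hone).eventually_right_inverse
    rwa [hf0] at this
  have hmono : StrictMono (fun w : ℝ => w ^ 3 + w) := fun a b hab => by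
    have h1 : (0:ℝ) < a ^ 2 + a * b + b ^ 2 + 1 := by
      nlinarith [sq_nonneg (a + b), sq_nonneg a, sq_nonneg b]
    have h2 := mul_pos (sub_pos.2 hab) h1
    show a ^ 3 + a < b ^ 3 + b
    nlinarith [h2]
  have hinj : Function.Injective f := fun a b hab => by
    apply hmono.injective
    simp only [hf_def, neg_inj] at hab
    exact hab
  have heq : burgersW =ᶠ[𝓝 0] hfa.localInverse hFD hone := by
    filter_upwards [hright] with y hy
    apply hinj
    rw [hy]
    show -(burgersW y ^ 3 + burgersW y) = y
    linear_combination -(burgersW_cubic y)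
  exact hg.congr_of_eventuallyEq heq

/-- `W̄` is smooth near `0`, and its iterated derivatives at the origin satisfy
`W̄(0) = 0`, `W̄'(0) = -1`, `W̄''(0) = 0`, `W̄'''(0) = 6`. -/
theorem burgersW_derivs_at_zero :
    ContDiffAt ℝ (⊤ : ℕ∞) burgersW 0 ∧
      burgersW 0 = 0 ∧
      iteratedDeriv 1 burgersW 0 = -1 ∧
      iteratedDeriv 2 burgersW 0 = 0 ∧
      iteratedDeriv 3 burgersW 0 = 6 := by
  have hW := burgersW_cubic
  have q_pos : ∀ y : ℝ, (0:ℝ) < 3 * burgersW y ^ 2 + 1 := fun y => by positivity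
  have hd : ∀ᶠ y in 𝓝 (0:ℝ), DifferentiableAt ℝ burgersW y := by
    have h1 : ContDiffAt ℝ 1 burgersW 0 := burgersW_contDiffAt.of_le (by exact_mod_cast le_top)
    filter_upwards [h1.eventually (by norm_num)] with y hy
    exact hy.differentiableAt one_ne_zero
  have e1 : deriv burgersW =ᶠ[𝓝 (0:ℝ)] fun y => -(3 * burgersW y ^ 2 + 1)⁻¹ := by
    filter_upwards [hd] with y hy
    have h1 : HasDerivAt (fun z => burgersW z ^ 3 + burgersW z + z)
        (((3:ℕ):ℝ) * burgersW y ^ (3 - 1) * deriv burgersW y + deriv burgersW y + 1) y :=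
      ((hy.hasDerivAt.pow 3).add hy.hasDerivAt).add (hasDerivAt_id y)
    have h0 : HasDerivAt (fun _ : ℝ => (0:ℝ))
        (((3:ℕ):ℝ) * burgersW y ^ (3 - 1) * deriv burgersW y + deriv burgersW y + 1) y :=
      h1.congr_of_eventuallyEq (Eventually.of_forall fun z => (hW z).symm)
    have key : 3 * burgersW y ^ 2 * deriv burgersW y + deriv burgersW y + 1 = 0 := by
      have h := h0.unique (hasDerivAt_const y 0)
      norm_num at h
      linarith
    have hne := (q_pos y).ne'
    have h2 : deriv burgersW y * (3 * burgersW y ^ 2 + 1) = -1 := by linear_combination key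
    field_simp
    linarith [h2]
  have hderiv0 : deriv burgersW 0 = -1 := by
    have h := e1.self_of_nhds
    simp only [burgersW_zero] at h
    rw [h]
    norm_num
  have hφd : ∀ᶠ y in 𝓝 (0:ℝ), deriv (fun z => -(3 * burgersW z ^ 2 + 1)⁻¹) y
      = 6 * burgersW y * deriv burgersW y / (3 * burgersW y ^ 2 + 1) ^ 2 := by
    filter_upwards [hd] with y hy
    have hq : HasDerivAt (fun z => 3 * burgersW z ^ 2 + 1)
        (6 * burgersW y * deriv burgersW y) y := by
      have h : HasDerivAt (fun z => 3 * burgersW z ^ 2 + 1)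
          (3 * (((2:ℕ):ℝ) * burgersW y ^ (2 - 1) * deriv burgersW y)) y :=
        ((hy.hasDerivAt.pow 2).const_mul (3:ℝ)).add_const 1
      convert h using 1
      push_cast
      ring
    have h : HasDerivAt (fun z => -(3 * burgersW z ^ 2 + 1)⁻¹) _ y := (hq.inv (q_pos y).ne').neg
    rw [h.deriv]
    ring
  have e3 : deriv (deriv burgersW) =ᶠ[𝓝 (0:ℝ)]
      fun y => -6 * burgersW y / (3 * burgersW y ^ 2 + 1) ^ 3 := by
    filter_upwards [e1.deriv, hφd, e1] with y h1 h2 h3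
    rw [h1, h2, h3]
    have hne := (q_pos y).ne'
    rw [div_eq_div_iff (by positivity) (by positivity)]
    field_simp
  have hd2 : deriv (deriv burgersW) 0 = 0 := by
    have h := e3.self_of_nhds
    simp only [burgersW_zero] at h
    rw [h]
    norm_num
  have hd3 : deriv (deriv (deriv burgersW)) 0 = 6 := by
    rw [e3.deriv.self_of_nhds]
    have hW0 : DifferentiableAt ℝ burgersW 0 := hd.self_of_nhds
    have hnum : HasDerivAt (fun y => -6 * burgersW y) (-6 * deriv burgersW 0) 0 :=
      hW0.hasDerivAt.const_mul (-6)
    have hq : HasDerivAt (fun z => 3 * burgersW z ^ 2 + 1)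
        (6 * burgersW 0 * deriv burgersW 0) 0 := by
      have h : HasDerivAt (fun z => 3 * burgersW z ^ 2 + 1)
          (3 * (((2:ℕ):ℝ) * burgersW 0 ^ (2 - 1) * deriv burgersW 0)) 0 :=
        ((hW0.hasDerivAt.pow 2).const_mul (3:ℝ)).add_const 1
      convert h using 1
      push_cast
      ring
    have h : HasDerivAt (fun y => -6 * burgersW y / (3 * burgersW y ^ 2 + 1) ^ 3) _ 0 :=
      hnum.div (hq.pow 3) (by positivity)
    rw [h.deriv, burgersW_zero, hderiv0]
    norm_num
  refine ⟨burgersW_contDiffAt, burgersW_zero, ?_, ?_, ?_⟩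
  · rw [iteratedDeriv_one]
    exact hderiv0
  · rw [show (2:ℕ) = 1 + 1 from rfl, iteratedDeriv_succ, iteratedDeriv_one]
    exact hd2
  · rw [show (3:ℕ) = 1 + 1 + 1 from rfl, iteratedDeriv_succ, iteratedDeriv_succ,
      iteratedDeriv_one]
    exact hd3
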